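/- Let b be a prime, m ≥ 1, and let P_n = (V_0,…,V_{b^m−1}) be the digital net in base b with generating matrices C_1,…,C_s ∈ F_b^{m×m}, each of which is nonsingular (equivalently, each one-dimensional projection of P_n is a (0,m,1)-net in base b). Then for every k ∈ ℕ^s with |k| ≤ m, P_n is k-equidistributed in base b if and only if C_b(k;P_n) ≤ 1. -/

import Mathlib

open MeasureTheory
open scoped Classical

noncomputable def gammaB (b : ℕ) (x y : ℝ) : ℕ∞ :=
  if x = y then ⊤
  else (↑(sInf {i : ℕ | ⌊(b : ℝ) ^ i * x⌋ = ⌊(b : ℝ) ^ i * y⌋ ∧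
      ⌊(b : ℝ) ^ (i + 1) * x⌋ ≠ ⌊(b : ℝ) ^ (i + 1) * y⌋}) : ℕ∞)

noncomputable def mB {n s : ℕ} (b : ℕ) (P : Fin n → Fin s → ℝ) (k : Fin s → ℕ) (l : Fin n) : ℕ :=
  (Finset.univ.filter fun j : Fin n =>
    j ≠ l ∧ ∀ r : Fin s, (k r : ℕ∞) ≤ gammaB b (P l r) (P j r)).card

noncomputable def nB {n s : ℕ} (b : ℕ) (P : Fin n → Fin s → ℝ) (i : Fin s → ℕ) (l : Fin n) : ℕ :=
  (Finset.univ.filter fun j : Fin n =>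
    j ≠ l ∧ ∀ r : Fin s, gammaB b (P l r) (P j r) = (i r : ℕ∞)).card

noncomputable def MB {n s : ℕ} (b : ℕ) (P : Fin n → Fin s → ℝ) (k : Fin s → ℕ) : ℕ :=
  ∑ l : Fin n, mB b P k l

noncomputable def NB {n s : ℕ} (b : ℕ) (P : Fin n → Fin s → ℝ) (i : Fin s → ℕ) : ℕ :=
  ∑ l : Fin n, nB b P i l

noncomputable def CB {n s : ℕ} (b : ℕ) (P : Fin n → Fin s → ℝ) (k : Fin s → ℕ) : ℝ :=
  (b : ℝ) ^ (∑ j, k j) * (MB b P k : ℝ) / ((n : ℝ) * ((n : ℝ) - 1))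

def ElemInterval (b s : ℕ) (k a : Fin s → ℕ) : Set (Fin s → ℝ) :=
  {x | ∀ j : Fin s, (a j : ℝ) / (b : ℝ) ^ k j ≤ x j ∧ x j < ((a j : ℝ) + 1) / (b : ℝ) ^ k j}

def kEquidistributed (b m : ℕ) {n s : ℕ} (P : Fin n → Fin s → ℝ) (k : Fin s → ℕ) : Prop :=
  ∀ a : Fin s → ℕ, (∀ j, a j < b ^ k j) →
    (Finset.univ.filter fun i : Fin n => P i ∈ ElemInterval b s k a).card = b ^ (m - ∑ j, k j)

noncomputable def digitalNet (b m s : ℕ) (C : Fin s → Matrix (Fin m) (Fin m) (ZMod b)) :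
    Fin (b ^ m) → Fin s → ℝ :=
  fun i ℓ => ∑ r : Fin m,
    ((((C ℓ).mulVec fun p : Fin m => ((((i : ℕ) / b ^ (p : ℕ)) % b : ℕ) : ZMod b)) r).val : ℝ) /
      (b : ℝ) ^ ((r : ℕ) + 1)

noncomputable def stackRank (b m s : ℕ) (C : Fin s → Matrix (Fin m) (Fin m) (ZMod b))
    (k : Fin s → ℕ) (hk : ∀ j, k j ≤ m) : ℕ :=
  (Matrix.of fun (x : (j : Fin s) × Fin (k j)) (p : Fin m) =>
    C x.1 ⟨(x.2 : ℕ), lt_of_lt_of_le x.2.2 (hk x.1)⟩ p).rank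


namespace Stmt10Aux

theorem sum_digits_mod (b M i : ℕ) :
    ∑ p ∈ Finset.range M, (i / b ^ p % b) * b ^ p = i % b ^ M := by
  induction M with
  | zero => simp [Nat.mod_one]
  | succ M ih =>
      rw [Finset.sum_range_succ, ih, Nat.mod_pow_succ]
      ring

theorem sum_digits_lt {b : ℕ} (hb : 1 ≤ b) (M : ℕ) (w : ℕ → ℕ) (hw : ∀ p, p < M → w p < b) :
    ∑ p ∈ Finset.range M, w p * b ^ p < b ^ M := by
  induction M with
  | zero => simp
  | succ M ih =>
      have h1 := ih (fun p hp => hw p (by omega))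
      have h2 : w M < b := hw M (by omega)
      rw [Finset.sum_range_succ]
      calc ∑ p ∈ Finset.range M, w p * b ^ p + w M * b ^ M
          < b ^ M + w M * b ^ M := by omega
        _ = (1 + w M) * b ^ M := by ring
        _ ≤ b * b ^ M := Nat.mul_le_mul_right _ (by omega)
        _ = b ^ (M + 1) := by ring

theorem sum_digits_div {b : ℕ} (hb : 1 ≤ b) (M q : ℕ) (hq : q ≤ M) (w : ℕ → ℕ)
    (hw : ∀ p, p < M → w p < b) :
    (∑ p ∈ Finset.range M, w p * b ^ p) / b ^ q
      = ∑ p ∈ Finset.range (M - q), w (p + q) * b ^ p := by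
  have h2 : ∑ p ∈ Finset.Ico q M, w p * b ^ p
      = (∑ p ∈ Finset.range (M - q), w (p + q) * b ^ p) * b ^ q := by
    rw [Finset.sum_Ico_eq_sum_range, Finset.sum_mul]
    refine Finset.sum_congr rfl fun p hp => ?_
    rw [add_comm q p, pow_add]
    ring
  have hsplit : ∑ p ∈ Finset.range M, w p * b ^ p
      = ∑ p ∈ Finset.range q, w p * b ^ p
        + (∑ p ∈ Finset.range (M - q), w (p + q) * b ^ p) * b ^ q := by
    rw [Finset.range_eq_Ico, ← Finset.sum_Ico_consecutive _ (Nat.zero_le q) hq, h2,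
      ← Finset.range_eq_Ico]
  rw [hsplit]
  have hA : ∑ p ∈ Finset.range q, w p * b ^ p < b ^ q :=
    sum_digits_lt hb q w (fun p hp => hw p (by omega))
  have hbq : 0 < b ^ q := Nat.pow_pos hb
  rw [Nat.add_mul_div_right _ _ hbq, Nat.div_eq_of_lt hA, zero_add]

theorem sum_digits_extract {b : ℕ} (hb : 1 ≤ b) (M q : ℕ) (hq : q < M) (w : ℕ → ℕ)
    (hw : ∀ p, p < M → w p < b) :
    (∑ p ∈ Finset.range M, w p * b ^ p) / b ^ q % b = w q := by
  rw [sum_digits_div hb M q hq.le w hw]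
  obtain ⟨L, hL⟩ : ∃ L, M - q = L + 1 := ⟨M - q - 1, by omega⟩
  rw [hL, Finset.sum_range_succ']
  simp only [pow_zero, mul_one, zero_add]
  have hfac : ∑ p ∈ Finset.range L, w (p + 1 + q) * b ^ (p + 1)
      = b * ∑ p ∈ Finset.range L, w (p + 1 + q) * b ^ p := by
    rw [Finset.mul_sum]
    refine Finset.sum_congr rfl fun p hp => ?_
    ring
  rw [hfac, add_comm, Nat.add_mul_mod_self_left]
  exact Nat.mod_eq_of_lt (hw q hq)

def wgt {m : ℕ} (d : Fin m → ℕ) : ℕ → ℕ := fun p => if h : p < m then d ⟨m - 1 - p, by omega⟩ else 0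

def Nval (b : ℕ) {m : ℕ} (d : Fin m → ℕ) : ℕ := ∑ p ∈ Finset.range m, wgt d p * b ^ p

theorem wgt_lt {b m : ℕ} (hb : 1 ≤ b) {d : Fin m → ℕ} (hd : ∀ r, d r < b) (p : ℕ) :
    wgt d p < b := by
  unfold wgt
  split
  · exact hd _
  · omega

theorem wgt_spec {m : ℕ} (d : Fin m → ℕ) (r : Fin m) : wgt d (m - 1 - (r : ℕ)) = d r := by
  have hr : (r : ℕ) < m := r.2
  have h1 : m - 1 - (r : ℕ) < m := by omega
  unfold wgt
  rw [dif_pos h1]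
  congr 1
  exact Fin.ext (show m - 1 - (m - 1 - (r : ℕ)) = (r : ℕ) by omega)

theorem Nval_lt {b m : ℕ} (hb : 1 ≤ b) {d : Fin m → ℕ} (hd : ∀ r, d r < b) :
    Nval b d < b ^ m :=
  sum_digits_lt hb m _ (fun p _ => wgt_lt hb hd p)

theorem val_eq {b m : ℕ} (hb : 1 ≤ b) (d : Fin m → ℕ) :
    ∑ r : Fin m, (d r : ℝ) / (b : ℝ) ^ ((r : ℕ) + 1) = (Nval b d : ℝ) / (b : ℝ) ^ m := by
  have hb0 : (b : ℝ) ≠ 0 := by positivity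
  have h1 : (Nval b d : ℝ) = ∑ p ∈ Finset.range m, (wgt d p : ℝ) * (b : ℝ) ^ p := by
    unfold Nval; push_cast; ring
  rw [h1, ← Finset.sum_range_reflect, Finset.sum_div]
  rw [← Fin.sum_univ_eq_sum_range
    (fun p => (wgt d (m - 1 - p) : ℝ) * (b : ℝ) ^ (m - 1 - p) / (b : ℝ) ^ m)]
  refine Finset.sum_congr rfl fun r _ => ?_
  have hr : (r : ℕ) < m := r.2
  rw [wgt_spec]
  have hpow : (b : ℝ) ^ (m - 1 - (r : ℕ)) * (b : ℝ) ^ ((r : ℕ) + 1) = (b : ℝ) ^ m := by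
    rw [← pow_add]
    congr 1
    omega
  field_simp
  rw [← hpow]
  ring

theorem val_nonneg {b m : ℕ} (d : Fin m → ℕ) :
    0 ≤ ∑ r : Fin m, (d r : ℝ) / (b : ℝ) ^ ((r : ℕ) + 1) := by
  refine Finset.sum_nonneg fun r _ => by positivity

theorem val_lt_one {b m : ℕ} (hb : 1 ≤ b) {d : Fin m → ℕ} (hd : ∀ r, d r < b) :
    ∑ r : Fin m, (d r : ℝ) / (b : ℝ) ^ ((r : ℕ) + 1) < 1 := by
  rw [val_eq hb d]
  have h1 : (0 : ℝ) < (b : ℝ) ^ m := by positivity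
  rw [div_lt_one h1]
  exact_mod_cast Nval_lt hb hd

theorem floor_val {b m t : ℕ} (hb : 1 ≤ b) (ht : t ≤ m) (d : Fin m → ℕ) :
    ⌊(b : ℝ) ^ t * ∑ r : Fin m, (d r : ℝ) / (b : ℝ) ^ ((r : ℕ) + 1)⌋₊
      = Nval b d / b ^ (m - t) := by
  rw [val_eq hb d]
  have hb0 : (0 : ℝ) < (b : ℝ) := by exact_mod_cast hb
  have hpow : (b : ℝ) ^ m = (b : ℝ) ^ (m - t) * (b : ℝ) ^ t := by
    rw [← pow_add]; congr 1; omega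
  have h2 : (b : ℝ) ^ t * ((Nval b d : ℝ) / (b : ℝ) ^ m)
      = (Nval b d : ℝ) / ((b ^ (m - t) : ℕ) : ℝ) := by
    rw [hpow]
    push_cast
    field_simp
  rw [h2, Nat.floor_div_natCast, Nat.floor_natCast]

theorem wgt_spec' {m : ℕ} (d : Fin m → ℕ) (p : ℕ) (h : p < m) :
    wgt d p = d ⟨m - 1 - p, by omega⟩ := dif_pos h

theorem pref_repr {b m t : ℕ} (hb : 1 ≤ b) (ht : t ≤ m) (d : Fin m → ℕ) (hd : ∀ r, d r < b) :
    Nval b d / b ^ (m - t) = ∑ p ∈ Finset.range t, wgt d (p + (m - t)) * b ^ p := by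
  unfold Nval
  rw [sum_digits_div hb m (m - t) (by omega) _ (fun p _ => wgt_lt hb hd p),
    show m - (m - t) = t by omega]

theorem pref_extract {b m t r : ℕ} (hb : 1 ≤ b) (ht : t ≤ m) (hr : r < t)
    (d : Fin m → ℕ) (hd : ∀ q, d q < b) :
    Nval b d / b ^ (m - t) / b ^ (t - 1 - r) % b = d ⟨r, by omega⟩ := by
  rw [pref_repr hb ht d hd]
  rw [sum_digits_extract hb t (t - 1 - r) (by omega) _ (fun p _ => wgt_lt hb hd _)]
  have h1 : t - 1 - r + (m - t) = m - 1 - r := by omega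
  rw [h1, wgt_spec' d _ (by omega)]
  congr 1
  exact Fin.ext (show m - 1 - (m - 1 - r) = r by omega)

theorem pref_eq_iff {b m t : ℕ} (hb : 1 ≤ b) (ht : t ≤ m) (d e : Fin m → ℕ)
    (hd : ∀ q, d q < b) (he : ∀ q, e q < b) :
    Nval b d / b ^ (m - t) = Nval b e / b ^ (m - t)
      ↔ ∀ r : ℕ, (hr : r < t) → d ⟨r, by omega⟩ = e ⟨r, by omega⟩ := by
  constructor
  · intro h r hr
    rw [← pref_extract hb ht hr d hd, ← pref_extract hb ht hr e he, h]
  · intro h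
    rw [pref_repr hb ht d hd, pref_repr hb ht e he]
    refine Finset.sum_congr rfl fun p hp => ?_
    have hpt : p < t := Finset.mem_range.mp hp
    have h2 : p + (m - t) < m := by omega
    rw [wgt_spec' d _ h2, wgt_spec' e _ h2]
    have h3 : m - 1 - (p + (m - t)) = t - 1 - p := by omega
    congr 1
    have := h (t - 1 - p) (by omega)
    rw [show (⟨m - 1 - (p + (m - t)), by omega⟩ : Fin m) = ⟨t - 1 - p, by omega⟩ from
      Fin.ext (show m - 1 - (p + (m - t)) = t - 1 - p by omega)]
    exact this

theorem pref_eq_digits {b m t a : ℕ} (hb : 1 ≤ b) (ht : t ≤ m) (ha : a < b ^ t)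
    (d : Fin m → ℕ) (hd : ∀ q, d q < b) :
    Nval b d / b ^ (m - t) = a
      ↔ ∀ r : ℕ, (hr : r < t) → d ⟨r, by omega⟩ = a / b ^ (t - 1 - r) % b := by
  constructor
  · intro h r hr
    rw [← pref_extract hb ht hr d hd, h]
  · intro h
    rw [pref_repr hb ht d hd]
    have : ∀ p ∈ Finset.range t, wgt d (p + (m - t)) * b ^ p = a / b ^ p % b * b ^ p := by
      intro p hp
      have hpt : p < t := Finset.mem_range.mp hp
      have h2 : p + (m - t) < m := by omega
      rw [wgt_spec' d _ h2]
      have h4 := h (t - 1 - p) (by omega)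
      rw [show (⟨m - 1 - (p + (m - t)), by omega⟩ : Fin m) = ⟨t - 1 - p, by omega⟩ from
        Fin.ext (show m - 1 - (p + (m - t)) = t - 1 - p by omega), h4, show t - 1 - (t - 1 - p) = p by omega]
    rw [Finset.sum_congr rfl this, sum_digits_mod, Nat.mod_eq_of_lt ha]

theorem gammaB_le_iff {b : ℕ} (hb : 2 ≤ b) {x y : ℝ} (hx0 : 0 ≤ x) (hx1 : x < 1)
    (hy0 : 0 ≤ y) (hy1 : y < 1) (t : ℕ) :
    (t : ℕ∞) ≤ gammaB b x y ↔ ⌊(b : ℝ) ^ t * x⌋ = ⌊(b : ℝ) ^ t * y⌋ := by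
  by_cases hxy : x = y
  · subst hxy
    simp [gammaB]
  · have hb1 : (1 : ℝ) < (b : ℝ) := by exact_mod_cast hb
    set A : ℕ → Prop := fun i => ⌊(b : ℝ) ^ i * x⌋ = ⌊(b : ℝ) ^ i * y⌋ with hA
    have a0 : A 0 := by
      simp only [hA, pow_zero, one_mul]
      rw [Int.floor_eq_zero_iff.mpr ⟨hx0, hx1⟩, Int.floor_eq_zero_iff.mpr ⟨hy0, hy1⟩]
    have step : ∀ i, A (i + 1) → A i := by
      intro i h
      have key : ∀ z : ℝ, 0 ≤ z → ⌊(b : ℝ) ^ i * z⌋ = (⌊(b : ℝ) ^ (i + 1) * z⌋₊ / b : ℕ) := by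
        intro z hz
        have hz1 : 0 ≤ (b : ℝ) ^ i * z := by positivity
        have hz2 : 0 ≤ (b : ℝ) ^ (i + 1) * z := by positivity
        rw [← Int.natCast_floor_eq_floor hz1]
        congr 1
        have : (b : ℝ) ^ i * z = (b : ℝ) ^ (i + 1) * z / (b : ℕ) := by
          rw [pow_succ]
          field_simp
        rw [this, Nat.floor_div_natCast]
      have hx' := key x hx0
      have hy' := key y hy0
      have hnat : ⌊(b : ℝ) ^ (i + 1) * x⌋₊ = ⌊(b : ℝ) ^ (i + 1) * y⌋₊ := by
        have e1 : 0 ≤ (b : ℝ) ^ (i + 1) * x := by positivity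
        have e2 : 0 ≤ (b : ℝ) ^ (i + 1) * y := by positivity
        have := h
        simp only [hA] at this
        rw [← Int.natCast_floor_eq_floor e1, ← Int.natCast_floor_eq_floor e2] at this
        exact_mod_cast this
      simp only [hA]
      rw [hx', hy', hnat]
    have notall : ∃ i, ¬ A i := by
      have hd : 0 < |x - y| := abs_pos.mpr (sub_ne_zero.mpr hxy)
      obtain ⟨i, hi⟩ := pow_unbounded_of_one_lt (1 / |x - y|) hb1
      refine ⟨i, fun h => ?_⟩
      have h1 : 1 < (b : ℝ) ^ i * |x - y| := by
        rw [div_lt_iff₀ hd] at hi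
        linarith
      have hbp : (0 : ℝ) < (b : ℝ) ^ i := by positivity
      have h2 : |(b : ℝ) ^ i * x - (b : ℝ) ^ i * y| = (b : ℝ) ^ i * |x - y| := by
        rw [← mul_sub, abs_mul, abs_of_pos hbp]
      simp only [hA] at h
      have h3 : (b : ℝ) ^ i * x < ⌊(b : ℝ) ^ i * x⌋ + 1 := Int.lt_floor_add_one _
      have h4 : (⌊(b : ℝ) ^ i * x⌋ : ℝ) ≤ (b : ℝ) ^ i * x := Int.floor_le _
      have h5 : (b : ℝ) ^ i * y < ⌊(b : ℝ) ^ i * y⌋ + 1 := Int.lt_floor_add_one _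
      have h6 : (⌊(b : ℝ) ^ i * y⌋ : ℝ) ≤ (b : ℝ) ^ i * y := Int.floor_le _
      rw [h] at h3 h4
      have habs : |(b : ℝ) ^ i * x - (b : ℝ) ^ i * y| < 1 :=
        abs_sub_lt_iff.mpr ⟨by linarith, by linarith⟩
      rw [h2] at habs
      linarith
    set i1 := sInf {i | ¬ A i} with hi1
    have h1 : ¬ A i1 := Nat.sInf_mem notall
    have hlt : ∀ j, j < i1 → A j := fun j hj => by
      by_contra hc
      have h2 := Nat.sInf_le (show j ∈ {i | ¬ A i} from hc)
      rw [← hi1] at h2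
      omega
    have hpos : 1 ≤ i1 := by
      rcases Nat.eq_zero_or_pos i1 with h | h
      · exact absurd (h ▸ h1) (not_not_intro a0)
      · exact h
    have adown : ∀ c j, A (j + c) → A j := by
      intro c
      induction c with
      | zero => exact fun j h => h
      | succ c ih => exact fun j h => ih j (step (j + c) h)
    have hnotA : ∀ i, A i → i < i1 := by
      intro i hAi
      by_contra hc
      obtain ⟨c, rfl⟩ := Nat.exists_eq_add_of_le (not_lt.mp hc)
      exact h1 (adown c i1 hAi)
    have hS : {i : ℕ | ⌊(b : ℝ) ^ i * x⌋ = ⌊(b : ℝ) ^ i * y⌋ ∧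
        ⌊(b : ℝ) ^ (i + 1) * x⌋ ≠ ⌊(b : ℝ) ^ (i + 1) * y⌋} = {i1 - 1} := by
      ext i
      simp only [Set.mem_setOf_eq, Set.mem_singleton_iff]
      constructor
      · rintro ⟨hAi, hnAi⟩
        have l1 : i < i1 := hnotA i hAi
        have l2 : ¬ (i + 1 < i1) := fun hc => hnAi (hlt _ hc)
        omega
      · intro h
        subst h
        refine ⟨hlt _ (by omega), fun hc => ?_⟩
        have : i1 - 1 + 1 = i1 := by omega
        rw [this] at hc
        exact h1 hc
    unfold gammaB
    rw [if_neg hxy, hS, csInf_singleton]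
    rw [Nat.cast_le]
    constructor
    · intro h
      exact hlt t (by omega)
    · intro h
      have := hnotA t h
      omega

def uvec (b m : ℕ) (i : ℕ) : Fin m → ZMod b := fun p => (((i / b ^ (p : ℕ)) % b : ℕ) : ZMod b)

def stk {b m s : ℕ} (C : Fin s → Matrix (Fin m) (Fin m) (ZMod b)) (k : Fin s → ℕ)
    (hk : ∀ j, k j ≤ m) : Matrix ((j : Fin s) × Fin (k j)) (Fin m) (ZMod b) :=
  Matrix.of fun x p => C x.1 ⟨(x.2 : ℕ), lt_of_lt_of_le x.2.2 (hk x.1)⟩ p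

def dvec {b m : ℕ} (M : Matrix (Fin m) (Fin m) (ZMod b)) (i : ℕ) : Fin m → ℕ :=
  fun r => (M.mulVec (uvec b m i) r).val

theorem digitalNet_eq {b m s : ℕ} (C : Fin s → Matrix (Fin m) (Fin m) (ZMod b))
    (i : Fin (b ^ m)) (ℓ : Fin s) :
    digitalNet b m s C i ℓ
      = ∑ r : Fin m, (dvec (C ℓ) (i : ℕ) r : ℝ) / (b : ℝ) ^ ((r : ℕ) + 1) := rfl

theorem dvec_lt {b m : ℕ} (hb : 2 ≤ b) (M : Matrix (Fin m) (Fin m) (ZMod b)) (i : ℕ)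
    (r : Fin m) : dvec M i r < b := by
  haveI : NeZero b := ⟨by omega⟩
  exact ZMod.val_lt _

theorem point_nonneg {b m s : ℕ} (C : Fin s → Matrix (Fin m) (Fin m) (ZMod b))
    (i : Fin (b ^ m)) (ℓ : Fin s) : 0 ≤ digitalNet b m s C i ℓ := by
  rw [digitalNet_eq]; exact val_nonneg _

theorem point_lt_one {b m s : ℕ} (hb : 2 ≤ b) (C : Fin s → Matrix (Fin m) (Fin m) (ZMod b))
    (i : Fin (b ^ m)) (ℓ : Fin s) : digitalNet b m s C i ℓ < 1 := by
  rw [digitalNet_eq]; exact val_lt_one (by omega) (dvec_lt hb _ _)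

theorem uvec_bijective {b m : ℕ} (hb : 2 ≤ b) :
    Function.Bijective (fun i : Fin (b ^ m) => uvec b m (i : ℕ)) := by
  haveI : NeZero b := ⟨by omega⟩
  rw [Fintype.bijective_iff_injective_and_card]
  refine ⟨?_, by rw [Fintype.card_fun, ZMod.card, Fintype.card_fin, Fintype.card_fin]⟩
  intro i j hij
  have hdig : ∀ p : Fin m, (i : ℕ) / b ^ (p : ℕ) % b = (j : ℕ) / b ^ (p : ℕ) % b := by
    intro p
    have h1 := congrFun hij p
    have e1 : ((i : ℕ) / b ^ (p : ℕ) % b) < b := Nat.mod_lt _ (by omega)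
    have e2 : ((j : ℕ) / b ^ (p : ℕ) % b) < b := Nat.mod_lt _ (by omega)
    rw [← ZMod.val_cast_of_lt e1, ← ZMod.val_cast_of_lt e2]
    exact congrArg ZMod.val h1
  have h2 : (i : ℕ) % b ^ m = (j : ℕ) % b ^ m := by
    rw [← sum_digits_mod b m (i : ℕ), ← sum_digits_mod b m (j : ℕ)]
    refine Finset.sum_congr rfl fun p hp => ?_
    rw [hdig ⟨p, Finset.mem_range.mp hp⟩]
  apply Fin.ext
  rwa [Nat.mod_eq_of_lt i.2, Nat.mod_eq_of_lt j.2] at h2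

theorem zmod_eq_cast_iff {b : ℕ} (hb : 2 ≤ b) (z : ZMod b) (n : ℕ) (hn : n < b) :
    z = (n : ZMod b) ↔ z.val = n := by
  haveI : NeZero b := ⟨by omega⟩
  constructor
  · rintro rfl
    exact ZMod.val_cast_of_lt hn
  · rintro rfl
    simp

theorem zmod_eq_iff_val {b : ℕ} (hb : 2 ≤ b) (z z' : ZMod b) : z = z' ↔ z.val = z'.val := by
  haveI : NeZero b := ⟨by omega⟩
  exact ⟨fun h => h ▸ rfl, fun h => ZMod.val_injective b h⟩

theorem stk_apply {b m s : ℕ} (C : Fin s → Matrix (Fin m) (Fin m) (ZMod b)) (k : Fin s → ℕ)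
    (hk : ∀ j, k j ≤ m) (w : Fin m → ZMod b) (x : (j : Fin s) × Fin (k j)) :
    (stk C k hk).mulVecLin w x
      = (C x.1).mulVec w ⟨(x.2 : ℕ), lt_of_lt_of_le x.2.2 (hk x.1)⟩ := rfl

theorem point_floor {b m s : ℕ} (hb : 2 ≤ b) (C : Fin s → Matrix (Fin m) (Fin m) (ZMod b))
    (i : Fin (b ^ m)) (ℓ : Fin s) {t : ℕ} (ht : t ≤ m) :
    ⌊(b : ℝ) ^ t * digitalNet b m s C i ℓ⌋₊ = Nval b (dvec (C ℓ) (i : ℕ)) / b ^ (m - t) := by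
  rw [digitalNet_eq, floor_val (by omega) ht]

theorem int_floor_eq_iff_nat {x y : ℝ} (hx : 0 ≤ x) (hy : 0 ≤ y) :
    ⌊x⌋ = ⌊y⌋ ↔ ⌊x⌋₊ = ⌊y⌋₊ := by
  rw [← Int.natCast_floor_eq_floor hx, ← Int.natCast_floor_eq_floor hy, Nat.cast_inj]

theorem cond_iff {b m s : ℕ} (hb : 2 ≤ b) (C : Fin s → Matrix (Fin m) (Fin m) (ZMod b))
    (k : Fin s → ℕ) (hk : ∀ j, k j ≤ m) (l i : Fin (b ^ m)) :
    (∀ r : Fin s, (k r : ℕ∞) ≤ gammaB b (digitalNet b m s C l r) (digitalNet b m s C i r))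
      ↔ (stk C k hk).mulVecLin (uvec b m (l : ℕ))
          = (stk C k hk).mulVecLin (uvec b m (i : ℕ)) := by
  have hbb : (1 : ℕ) ≤ b := by omega
  have key : ∀ r : Fin s,
      ((k r : ℕ∞) ≤ gammaB b (digitalNet b m s C l r) (digitalNet b m s C i r))
        ↔ ∀ t : ℕ, (ht : t < k r) →
            dvec (C r) (l : ℕ) ⟨t, lt_of_lt_of_le ht (hk r)⟩
              = dvec (C r) (i : ℕ) ⟨t, lt_of_lt_of_le ht (hk r)⟩ := by
    intro r
    rw [gammaB_le_iff hb (point_nonneg C l r) (point_lt_one hb C l r)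
        (point_nonneg C i r) (point_lt_one hb C i r) (k r),
      int_floor_eq_iff_nat (mul_nonneg (by positivity) (point_nonneg C l r))
        (mul_nonneg (by positivity) (point_nonneg C i r)),
      point_floor hb C l r (hk r), point_floor hb C i r (hk r),
      pref_eq_iff hbb (hk r) _ _ (dvec_lt hb _ _) (dvec_lt hb _ _)]
  simp only [key]
  constructor
  · intro h
    funext x
    have h2 := h x.1 (x.2 : ℕ) x.2.2
    rw [stk_apply, stk_apply, zmod_eq_iff_val hb]
    exact h2
  · intro h r t ht
    have h2 := congrFun h ⟨r, ⟨t, ht⟩⟩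
    rw [stk_apply, stk_apply, zmod_eq_iff_val hb] at h2
    exact h2

def vA {b s : ℕ} (k : Fin s → ℕ) (a : Fin s → ℕ) : ((j : Fin s) × Fin (k j)) → ZMod b :=
  fun x => ((a x.1 / b ^ (k x.1 - 1 - (x.2 : ℕ)) % b : ℕ) : ZMod b)

theorem mem_iff {b m s : ℕ} (hb : 2 ≤ b) (C : Fin s → Matrix (Fin m) (Fin m) (ZMod b))
    (k : Fin s → ℕ) (hk : ∀ j, k j ≤ m) (a : Fin s → ℕ) (ha : ∀ j, a j < b ^ k j)
    (i : Fin (b ^ m)) :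
    digitalNet b m s C i ∈ ElemInterval b s k a
      ↔ (stk C k hk).mulVecLin (uvec b m (i : ℕ)) = vA k a := by
  have hbb : (1 : ℕ) ≤ b := by omega
  have key : ∀ ℓ : Fin s,
      ((a ℓ : ℝ) / (b : ℝ) ^ k ℓ ≤ digitalNet b m s C i ℓ ∧
        digitalNet b m s C i ℓ < ((a ℓ : ℝ) + 1) / (b : ℝ) ^ k ℓ)
        ↔ ∀ t : ℕ, (ht : t < k ℓ) →
            dvec (C ℓ) (i : ℕ) ⟨t, lt_of_lt_of_le ht (hk ℓ)⟩
              = a ℓ / b ^ (k ℓ - 1 - t) % b := by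
    intro ℓ
    have hc : (0 : ℝ) < (b : ℝ) ^ k ℓ := by positivity
    have h1 : ((a ℓ : ℝ) / (b : ℝ) ^ k ℓ ≤ digitalNet b m s C i ℓ ∧
        digitalNet b m s C i ℓ < ((a ℓ : ℝ) + 1) / (b : ℝ) ^ k ℓ)
        ↔ ⌊(b : ℝ) ^ k ℓ * digitalNet b m s C i ℓ⌋₊ = a ℓ := by
      rw [Nat.floor_eq_iff (mul_nonneg (by positivity) (point_nonneg C i ℓ)),
        div_le_iff₀ hc, lt_div_iff₀ hc]
      constructor
      · rintro ⟨u1, u2⟩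
        constructor
        · rw [mul_comm] at u1; exact u1
        · rw [mul_comm]; exact u2
      · rintro ⟨u1, u2⟩
        constructor
        · rw [mul_comm]; exact u1
        · rw [mul_comm] at u2; exact u2
    rw [h1, point_floor hb C i ℓ (hk ℓ),
      pref_eq_digits hbb (hk ℓ) (ha ℓ) _ (dvec_lt hb _ _)]
  unfold ElemInterval
  simp only [Set.mem_setOf_eq, key]
  constructor
  · intro h
    funext x
    have h2 := h x.1 (x.2 : ℕ) x.2.2
    simp only [vA]
    rw [stk_apply, zmod_eq_cast_iff hb _ _ (Nat.mod_lt _ (by omega))]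
    exact h2
  · intro h ℓ t ht
    have h2 := congrFun h ⟨ℓ, ⟨t, ht⟩⟩
    simp only [vA] at h2
    rw [stk_apply, zmod_eq_cast_iff hb _ _ (Nat.mod_lt _ (by omega))] at h2
    exact h2

theorem vA_surjective {b s : ℕ} (hb : 2 ≤ b) (k : Fin s → ℕ)
    (v : ((j : Fin s) × Fin (k j)) → ZMod b) :
    ∃ a : Fin s → ℕ, (∀ j, a j < b ^ k j) ∧ vA k a = v := by
  haveI : NeZero b := ⟨by omega⟩
  classical
  refine ⟨fun j => ∑ p ∈ Finset.range (k j),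
    (if h : p < k j then (v ⟨j, ⟨k j - 1 - p, by omega⟩⟩).val else 0) * b ^ p, fun j => ?_, ?_⟩
  · exact sum_digits_lt (by omega) _ _ (fun p hp => by
      split
      · exact ZMod.val_lt _
      · omega)
  · funext x
    obtain ⟨j, t⟩ := x
    unfold vA
    simp only []
    rw [sum_digits_extract (by omega : 1 ≤ b) (k j) (k j - 1 - (t : ℕ)) (by omega) _
      (fun p hp => by
        split
        · exact ZMod.val_lt _
        · omega)]
    rw [dif_pos (show k j - 1 - (t : ℕ) < k j by omega)]
    have ht : (t : ℕ) < k j := t.2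
    rw [show (⟨k j - 1 - (k j - 1 - (t : ℕ)), by omega⟩ : Fin (k j)) = t from
      Fin.ext (show k j - 1 - (k j - 1 - (t : ℕ)) = (t : ℕ) by omega)]
    simp


theorem card_filter_transfer {α β : Type*} [Fintype α] [Fintype β] (e : α → β)
    (he : Function.Bijective e) (P : α → Prop) (Q : β → Prop)
    {iP : DecidablePred P} {iQ : DecidablePred Q} (h : ∀ a, P a ↔ Q (e a)) :
    (@Finset.filter _ P iP Finset.univ).card = (@Finset.filter _ Q iQ Finset.univ).card := by
  refine Finset.card_bij (fun a _ => e a) ?_ ?_ ?_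
  · intro a ha
    rw [Finset.mem_filter] at ha ⊢
    exact ⟨Finset.mem_univ _, (h a).mp ha.2⟩
  · intro a₁ h₁ a₂ h₂ hee
    exact he.1 hee
  · intro w hw
    obtain ⟨a, rfl⟩ := he.2 w
    rw [Finset.mem_filter] at hw
    exact ⟨a, Finset.mem_filter.mpr ⟨Finset.mem_univ _, (h a).mpr hw.2⟩, rfl⟩

theorem fiber_card_eq {R W U : Type*} [Ring R] [AddCommGroup W] [Module R W]
    [AddCommGroup U] [Module R U] [Fintype W]
    (T : W →ₗ[R] U) {v : U} (hv : v ∈ LinearMap.range T)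
    {iP : DecidablePred fun w => T w = v} :
    (@Finset.filter _ (fun w => T w = v) iP Finset.univ).card
      = Nat.card (LinearMap.ker T) := by
  classical
  obtain ⟨w0, rfl⟩ := hv
  rw [Nat.card_eq_fintype_card, ← Fintype.card_subtype]
  exact Fintype.card_congr
    { toFun := fun w => ⟨w.1 - w0, by
        have hw := w.2
        simp only [LinearMap.mem_ker, map_sub, hw, sub_self]⟩
      invFun := fun u => ⟨u.1 + w0, by
        have hu := u.2
        simp only [LinearMap.mem_ker] at hu
        simp [map_add, hu]⟩
      left_inv := fun w => by simp
      right_inv := fun u => by simp }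

theorem fiber_card_zero {R W U : Type*} [Ring R] [AddCommGroup W] [Module R W]
    [AddCommGroup U] [Module R U] [Fintype W]
    (T : W →ₗ[R] U) {v : U} (hv : v ∉ LinearMap.range T)
    {iP : DecidablePred fun w => T w = v} :
    (@Finset.filter _ (fun w => T w = v) iP Finset.univ).card = 0 := by
  rw [Finset.card_eq_zero, Finset.filter_eq_empty_iff]
  exact fun w _ hw => hv ⟨w, hw⟩

theorem count_interval {b m s : ℕ} [NeZero b] (hb : 2 ≤ b)
    (C : Fin s → Matrix (Fin m) (Fin m) (ZMod b))
    (k : Fin s → ℕ) (hk : ∀ j, k j ≤ m) (a : Fin s → ℕ) (ha : ∀ j, a j < b ^ k j) :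
    (Finset.univ.filter fun i : Fin (b ^ m) =>
        digitalNet b m s C i ∈ ElemInterval b s k a).card
      = if vA k a ∈ LinearMap.range (stk C k hk).mulVecLin
          then Nat.card (LinearMap.ker (stk C k hk).mulVecLin) else 0 := by
  have step : (Finset.univ.filter fun i : Fin (b ^ m) =>
      digitalNet b m s C i ∈ ElemInterval b s k a).card
      = (Finset.univ.filter fun w : Fin m → ZMod b =>
          (stk C k hk).mulVecLin w = vA k a).card :=
    card_filter_transfer (fun i : Fin (b ^ m) => uvec b m (i : ℕ)) (uvec_bijective hb)
      _ _ (fun i => mem_iff hb C k hk a ha i)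
  rw [step]
  by_cases hv : vA k a ∈ LinearMap.range (stk C k hk).mulVecLin
  · rw [if_pos hv]
    exact fiber_card_eq _ hv
  · rw [if_neg hv]
    exact fiber_card_zero _ hv

theorem mB_eq {b m s : ℕ} [NeZero b] (hb : 2 ≤ b)
    (C : Fin s → Matrix (Fin m) (Fin m) (ZMod b))
    (k : Fin s → ℕ) (hk : ∀ j, k j ≤ m) (l : Fin (b ^ m)) :
    mB b (digitalNet b m s C) k l
      = Nat.card (LinearMap.ker (stk C k hk).mulVecLin) - 1 := by
  unfold mB
  have hinj : Function.Injective (fun i : Fin (b ^ m) => uvec b m (i : ℕ)) :=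
    (uvec_bijective hb).1
  have step : (Finset.univ.filter fun j : Fin (b ^ m) =>
      j ≠ l ∧ ∀ r : Fin s,
        (k r : ℕ∞) ≤ gammaB b (digitalNet b m s C l r) (digitalNet b m s C j r)).card
      = (Finset.univ.filter fun w : Fin m → ZMod b =>
          w ≠ uvec b m (l : ℕ) ∧ (stk C k hk).mulVecLin w
            = (stk C k hk).mulVecLin (uvec b m (l : ℕ))).card := by
    refine card_filter_transfer (fun i : Fin (b ^ m) => uvec b m (i : ℕ)) (uvec_bijective hb)
      _ _ (fun j => ?_)
    refine and_congr ?_ ?_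
    · exact Iff.symm (Function.Injective.ne_iff hinj)
    · rw [cond_iff hb C k hk l j]
      exact eq_comm
  rw [step]
  have step2 : (Finset.univ.filter fun w : Fin m → ZMod b =>
      w ≠ uvec b m (l : ℕ) ∧ (stk C k hk).mulVecLin w
        = (stk C k hk).mulVecLin (uvec b m (l : ℕ)))
      = (Finset.univ.filter fun w : Fin m → ZMod b =>
          (stk C k hk).mulVecLin w
            = (stk C k hk).mulVecLin (uvec b m (l : ℕ))).erase (uvec b m (l : ℕ)) := by
    ext w
    simp only [Finset.mem_erase, Finset.mem_filter, Finset.mem_univ, true_and, and_comm]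
  rw [step2, Finset.card_erase_of_mem (by rw [Finset.mem_filter]; exact ⟨Finset.mem_univ _, rfl⟩)]
  have step3 : (Finset.univ.filter fun w : Fin m → ZMod b =>
      (stk C k hk).mulVecLin w = (stk C k hk).mulVecLin (uvec b m (l : ℕ))).card
      = Nat.card (LinearMap.ker (stk C k hk).mulVecLin) :=
    fiber_card_eq _ ⟨uvec b m (l : ℕ), rfl⟩
  rw [step3]

theorem MB_eq {b m s : ℕ} [NeZero b] (hb : 2 ≤ b)
    (C : Fin s → Matrix (Fin m) (Fin m) (ZMod b))
    (k : Fin s → ℕ) (hk : ∀ j, k j ≤ m) :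
    MB b (digitalNet b m s C) k
      = b ^ m * (Nat.card (LinearMap.ker (stk C k hk).mulVecLin) - 1) := by
  unfold MB
  rw [Finset.sum_congr rfl (fun l _ => mB_eq hb C k hk l), Finset.sum_const,
    Finset.card_univ, Fintype.card_fin, smul_eq_mul]

end Stmt10Aux

theorem stmt10 (b m s : ℕ) [Fact (Nat.Prime b)] (hm : 1 ≤ m)
    (C : Fin s → Matrix (Fin m) (Fin m) (ZMod b)) (hC : ∀ ℓ, IsUnit (C ℓ))
    (k : Fin s → ℕ) (hk : ∑ j, k j ≤ m) :
    kEquidistributed b m (digitalNet b m s C) k ↔ CB b (digitalNet b m s C) k ≤ 1 := by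
  have hb : 2 ≤ b := (Fact.out (p := Nat.Prime b)).two_le
  haveI : NeZero b := ⟨by omega⟩
  have hk' : ∀ j, k j ≤ m := fun j =>
    le_trans (Finset.single_le_sum (f := k) (fun _ _ => Nat.zero_le _) (Finset.mem_univ j)) hk
  set ρ := (Stmt10Aux.stk C k hk').rank with hρdef
  set T := (Stmt10Aux.stk C k hk').mulVecLin with hTdef
  have hW : Module.finrank (ZMod b) (Fin m → ZMod b) = m := by
    rw [Module.finrank_pi, Fintype.card_fin]
  have hU : Module.finrank (ZMod b) (((j : Fin s) × Fin (k j)) → ZMod b) = ∑ j, k j := by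
    rw [Module.finrank_pi, Fintype.card_sigma]
    simp
  have hrange : Module.finrank (ZMod b) (LinearMap.range T) = ρ := rfl
  have hrknull := LinearMap.finrank_range_add_finrank_ker T
  rw [hW, hrange] at hrknull
  have hρm : ρ ≤ m := by omega
  have hρK : ρ ≤ ∑ j, k j := by
    have h := Matrix.rank_le_card_height (Stmt10Aux.stk C k hk')
    rwa [Fintype.card_sigma, show (∑ x : Fin s, Fintype.card (Fin (k x))) = ∑ j, k j by simp]
      at h
  have hker : Nat.card (LinearMap.ker T) = b ^ (m - ρ) := by
    rw [Nat.card_eq_fintype_card, Module.card_eq_pow_finrank (K := ZMod b) (V := LinearMap.ker T),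
      ZMod.card]
    congr 1
    omega
  have hbm : 2 ≤ b ^ m := le_trans hb (Nat.le_self_pow (by omega) b)
  have equidist_iff : kEquidistributed b m (digitalNet b m s C) k ↔ ρ = ∑ j, k j := by
    constructor
    · intro h
      by_contra hne
      have hlt : ρ < ∑ j, k j := lt_of_le_of_ne hρK hne
      have hr : LinearMap.range T ≠ ⊤ := by
        intro htop
        rw [htop, finrank_top, hU] at hrange
        omega
      obtain ⟨v, hv⟩ : ∃ v, v ∉ LinearMap.range T := by
        by_contra hvv
        push_neg at hvv
        exact hr (Submodule.eq_top_iff'.mpr hvv)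
      obtain ⟨a, ha, hva⟩ := Stmt10Aux.vA_surjective hb k v
      have hcnt := Stmt10Aux.count_interval hb C k hk' a ha
      rw [hva, if_neg hv] at hcnt
      have h2 := h a ha
      have h3 : b ^ (m - ∑ j, k j) = 0 := by rw [← h2, hcnt]
      have h4 : 0 < b ^ (m - ∑ j, k j) := Nat.pow_pos (by omega)
      omega
    · intro heq a ha
      have htop : LinearMap.range T = ⊤ := by
        apply Submodule.eq_top_of_finrank_eq
        rw [hrange, hU, heq]
      have hcnt := Stmt10Aux.count_interval hb C k hk' a ha
      rw [if_pos (htop ▸ Submodule.mem_top), hker] at hcnt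
      rw [hcnt, heq]
  have hMB := Stmt10Aux.MB_eq hb C k hk'
  rw [hker] at hMB
  have hc1 : (1 : ℕ) ≤ b ^ (m - ρ) := Nat.one_le_pow _ _ (by omega)
  have hbK1 : (1 : ℕ) ≤ b ^ (∑ j, k j) := Nat.one_le_pow _ _ (by omega)
  have cb_iff : CB b (digitalNet b m s C) k ≤ 1
      ↔ b ^ (∑ j, k j) * (b ^ (m - ρ) - 1) ≤ b ^ m - 1 := by
    unfold CB
    rw [hMB]
    have hpos : (0 : ℝ) < ((b ^ m : ℕ) : ℝ) * (((b ^ m : ℕ) : ℝ) - 1) := by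
      have h2 : (2 : ℝ) ≤ ((b ^ m : ℕ) : ℝ) := by exact_mod_cast hbm
      nlinarith
    rw [div_le_one hpos]
    have e1 : (b : ℝ) ^ (∑ j, k j) * ((b ^ m * (b ^ (m - ρ) - 1) : ℕ) : ℝ)
        = ((b ^ (∑ j, k j) * (b ^ m * (b ^ (m - ρ) - 1)) : ℕ) : ℝ) := by
      push_cast
      ring
    have e2 : ((b ^ m : ℕ) : ℝ) * (((b ^ m : ℕ) : ℝ) - 1)
        = ((b ^ m * (b ^ m - 1) : ℕ) : ℝ) := by
      rw [Nat.cast_mul, Nat.cast_sub (show (1 : ℕ) ≤ b ^ m by omega)]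
      push_cast
      ring
    rw [e1, e2, Nat.cast_le]
    constructor
    · intro h
      have h' : b ^ m * (b ^ (∑ j, k j) * (b ^ (m - ρ) - 1)) ≤ b ^ m * (b ^ m - 1) := by
        calc b ^ m * (b ^ (∑ j, k j) * (b ^ (m - ρ) - 1))
            = b ^ (∑ j, k j) * (b ^ m * (b ^ (m - ρ) - 1)) := by ring
          _ ≤ b ^ m * (b ^ m - 1) := h
      exact Nat.le_of_mul_le_mul_left h' (show 0 < b ^ m by omega)
    · intro h
      calc b ^ (∑ j, k j) * (b ^ m * (b ^ (m - ρ) - 1))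
          = b ^ m * (b ^ (∑ j, k j) * (b ^ (m - ρ) - 1)) := by ring
        _ ≤ b ^ m * (b ^ m - 1) := Nat.mul_le_mul_left _ h
  have claim : (b ^ (∑ j, k j) * (b ^ (m - ρ) - 1) ≤ b ^ m - 1) ↔ ρ = ∑ j, k j := by
    have key1 : b ^ (∑ j, k j) * (b ^ (m - ρ) - 1) + b ^ (∑ j, k j)
        = b ^ ((∑ j, k j) + (m - ρ)) := by
      have e3 : b ^ (∑ j, k j) * (b ^ (m - ρ) - 1) + b ^ (∑ j, k j)
          = b ^ (∑ j, k j) * (b ^ (m - ρ) - 1 + 1) := by ring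
      rw [e3, Nat.sub_add_cancel hc1, ← pow_add]
    constructor
    · intro h
      by_contra hne
      have hlt : ρ < ∑ j, k j := lt_of_le_of_ne hρK hne
      have h5 : b ^ (m + 1) ≤ b ^ ((∑ j, k j) + (m - ρ)) :=
        Nat.pow_le_pow_right (by omega) (by omega)
      have h6 : b ^ m * 2 ≤ b ^ (m + 1) := by
        rw [pow_succ]
        exact Nat.mul_le_mul_left _ hb
      have h7 : b ^ (∑ j, k j) ≤ b ^ m := Nat.pow_le_pow_right (by omega) hk
      omega
    · intro heq
      have e4 : (∑ j, k j) + (m - ρ) = m := by omega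
      rw [e4] at key1
      omega
  rw [equidist_iff, cb_iff, claim]
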